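/- Let G := {x ∈ (ZMod 2)^{ℤ×ℤ} : x_{i,j} + x_{i+1,j} + x_{i,j+1} = 0 for all (i,j)} with its normalized Haar probability measure μ. For every n ≥ 0, μ(x_{0,0} = 0, x_{2^n,0} = 0, x_{0,2^n} = 0) = 1/4, while μ(x_{0,0} = 0) = 1/2. Consequently the random field x under μ is not 3-fold mixing: the quantity μ(x_{0,0}=0, x_{2^n,0}=0, x_{0,2^n}=0) − μ(x_{0,0}=0)³ equals 1/8 for every n and does not tend to 0 although the mutual distances between the three windows {(0,0)}, {(2^n,0)}, {(0,2^n)} tend to infinity. -/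
import Mathlib


open MeasureTheory Filter

/-- The 3-dot rule defining Ledrappier's group
`G = {x ∈ (ZMod 2)^{ℤ×ℤ} : x_{i,j} + x_{i+1,j} + x_{i,j+1} = 0 for all (i,j)}`. -/
def ThreeDotConfig (x : ℤ × ℤ → ZMod 2) : Prop :=
  ∀ i j : ℤ, x (i, j) + x (i + 1, j) + x (i, j + 1) = 0

/-- `μ` is the normalized Haar probability measure of the closed subgroup `G` of the
compact abelian group `(ZMod 2)^{ℤ×ℤ}`, viewed as a measure on the ambient product
space: it is the unique probability measure carried by `G` and invariant under
translation by every element of `G`. -/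
def IsHaarOnThreeDot (μ : Measure ((ℤ × ℤ) → ZMod 2)) : Prop :=
  IsProbabilityMeasure μ ∧ μ {x | ThreeDotConfig x} = 1 ∧
    ∀ g : (ℤ × ℤ) → ZMod 2, ThreeDotConfig g → μ.map (fun x => x + g) = μ

/-- The pattern of `x` on the size-`ℓ` square window based at `v`, namely the finite
configuration `(x_{v + u})_{u ∈ {0,…,ℓ}²}`. -/
def squarePattern (ℓ : ℕ) (v : ℤ × ℤ) (x : ℤ × ℤ → ZMod 2) :
    Fin (ℓ + 1) × Fin (ℓ + 1) → ZMod 2 :=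
  fun u => x (v.1 + (u.1 : ℕ), v.2 + (u.2 : ℕ))

/-- Coefficient of `t^k` in `(1+t)^j` over `F₂`, for `j ∈ ℤ`. -/
def bfun (j k : ℤ) : ZMod 2 :=
  if k < 0 then 0
  else if 0 ≤ j then (Nat.choose j.toNat k.toNat : ZMod 2)
  else (Nat.choose (k - j - 1).toNat k.toNat : ZMod 2)

lemma zmod2_add_self : ∀ a : ZMod 2, a + a = 0 := by decide

lemma zmod2_two : (2 : ZMod 2) = 0 := by decide

lemma bfun_pascal (j k : ℤ) : bfun (j + 1) k = bfun j k + bfun j (k - 1) := by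
  unfold bfun
  rcases lt_or_ge k 0 with hk | hk
  · rw [if_pos hk, if_pos hk, if_pos (show k - 1 < 0 by omega), add_zero]
  rcases lt_or_ge k 1 with hk0 | hk1
  · have hk' : k = 0 := by omega
    subst hk'
    rw [if_neg (show ¬ (0:ℤ) < 0 by omega), if_neg (show ¬ (0:ℤ) < 0 by omega),
      if_pos (show (0:ℤ) - 1 < 0 by omega), add_zero]
    rcases le_or_gt 0 j with hj | hj
    · rw [if_pos (show (0:ℤ) ≤ j + 1 by omega), if_pos hj]
      simp
    · rcases le_or_gt 0 (j+1) with hj1 | hj1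
      · rw [if_pos hj1, if_neg (show ¬ (0:ℤ) ≤ j by omega)]
        simp
      · rw [if_neg (show ¬ (0:ℤ) ≤ j + 1 by omega), if_neg (show ¬ (0:ℤ) ≤ j by omega)]
        simp
  · -- k ≥ 1
    have hkn : k.toNat = (k-1).toNat + 1 := by omega
    rw [if_neg (show ¬ k < 0 by omega), if_neg (show ¬ k < 0 by omega),
      if_neg (show ¬ k - 1 < 0 by omega)]
    rcases le_or_gt 0 j with hj | hj
    · rw [if_pos (show (0:ℤ) ≤ j + 1 by omega), if_pos hj, if_pos hj]
      have hJ : (j+1).toNat = j.toNat + 1 := by omega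
      rw [hJ, hkn, Nat.choose_succ_succ]
      push_cast; ring
    · rcases le_or_gt 0 (j+1) with hj1 | hj1
      · have hj' : j = -1 := by omega
        subst hj'
        rw [if_pos (show (0:ℤ) ≤ -1 + 1 by omega), if_neg (show ¬ (0:ℤ) ≤ (-1:ℤ) by omega),
          if_neg (show ¬ (0:ℤ) ≤ (-1:ℤ) by omega)]
        have h0 : ((-1:ℤ) + 1).toNat.choose k.toNat = 0 := by
          rw [show ((-1:ℤ)+1).toNat = 0 by omega, hkn]; simp
        have h1 : (k - -1 - 1).toNat = k.toNat := by omega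
        have h2 : (k - 1 - -1 - 1).toNat = (k-1).toNat := by omega
        rw [h0, h1, h2, Nat.choose_self, Nat.choose_self]
        push_cast
        rw [← zmod2_two]; ring
      · rw [if_neg (show ¬ (0:ℤ) ≤ j + 1 by omega), if_neg (show ¬ (0:ℤ) ≤ j by omega),
          if_neg (show ¬ (0:ℤ) ≤ j by omega)]
        have hM1 : (k - j - 1).toNat = (k - (j+1) - 1).toNat + 1 := by omega
        have hM2 : (k - 1 - j - 1).toNat = (k - (j+1) - 1).toNat := by omega
        rw [hM1, hM2, hkn, Nat.choose_succ_succ]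
        push_cast
        set a := ((k - (j+1) - 1).toNat.choose ((k-1).toNat + 1) : ZMod 2)
        set b := ((k - (j+1) - 1).toNat.choose ((k-1).toNat) : ZMod 2)
        linear_combination (-b) * zmod2_two

lemma bfun_zero (k : ℤ) : bfun 0 k = if k = 0 then 1 else 0 := by
  unfold bfun
  rcases lt_or_ge k 0 with hk | hk
  · rw [if_pos hk, if_neg (show ¬ k = 0 by omega)]
  · rw [if_neg (show ¬ k < 0 by omega), if_pos le_rfl]
    rcases eq_or_lt_of_le hk with h | h
    · rw [if_pos h.symm, ← h]; simp
    · rw [if_neg (by omega)]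
      rw [show (0:ℤ).toNat = 0 from rfl, show k.toNat = (k-1).toNat + 1 by omega]
      simp

def gconf (c : ℤ) : ℤ × ℤ → ZMod 2 := fun p => bfun p.2 (c - p.1)

lemma gconf_threeDot (c : ℤ) : ThreeDotConfig (gconf c) := by
  intro i j
  show bfun j (c - i) + bfun j (c - (i+1)) + bfun (j+1) (c - i) = 0
  rw [bfun_pascal, show c - (i+1) = c - i - 1 by ring]
  linear_combination (bfun j (c - i) + bfun j (c - i - 1)) * zmod2_two

lemma propagate (x : ℤ × ℤ → ZMod 2) (hx : ThreeDotConfig x) :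
    ∀ (n : ℕ) (i j : ℤ), x (i, j + 2 ^ n) = x (i, j) + x (i + 2 ^ n, j) := by
  intro n
  induction n with
  | zero =>
    intro i j
    have := hx i j
    simp only [pow_zero]
    linear_combination this - x (i, j) * zmod2_two - x (i+1, j) * zmod2_two
  | succ n ih =>
    intro i j
    have h1 := ih i (j + 2 ^ n)
    have h2 := ih i j
    have h3 := ih (i + 2 ^ n) j
    have e1 : j + 2 ^ (n+1) = j + 2 ^ n + 2 ^ n := by ring
    have e2 : i + 2 ^ (n+1) = i + 2 ^ n + 2 ^ n := by ring
    rw [e1, e2, h1, h2, h3]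
    linear_combination x (i + 2 ^ n, j) * zmod2_two

lemma gconf_row0 (c i : ℤ) : gconf c (i, 0) = if c = i then 1 else 0 := by
  show bfun 0 (c - i) = _
  rw [bfun_zero]
  by_cases h : c = i <;> simp [h, sub_eq_zero]

lemma zmod2_ne_zero : ∀ a : ZMod 2, ¬a = 0 → a = 1 := by decide

/-- **(Ledrappier's 3-dot system is not 3-fold mixing.)**
Let `μ` be the normalized Haar probability measure of the 3-dot group `G`.  For every
`n ≥ 0`, `μ(x_{0,0} = 0, x_{2^n,0} = 0, x_{0,2^n} = 0) = 1/4` while `μ(x_{0,0}=0) = 1/2`;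
consequently `μ(x_{0,0}=0, x_{2^n,0}=0, x_{0,2^n}=0) − μ(x_{0,0}=0)³ = 1/8` for every
`n`, and it does not tend to `0` although the mutual distances between the three
windows `{(0,0)}`, `{(2^n,0)}`, `{(0,2^n)}` tend to infinity. -/
theorem threeDot_system_not_mixing3
    (μ : Measure ((ℤ × ℤ) → ZMod 2)) (hμ : IsHaarOnThreeDot μ) :
    (∀ n : ℕ,
        μ {x | x (0, 0) = 0 ∧ x ((2 : ℤ) ^ n, 0) = 0 ∧ x (0, (2 : ℤ) ^ n) = 0} = 1 / 4) ∧
      μ {x | x (0, 0) = 0} = 1 / 2 ∧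
        ∀ n : ℕ,
          (μ {x | x (0, 0) = 0 ∧ x ((2 : ℤ) ^ n, 0) = 0 ∧ x (0, (2 : ℤ) ^ n) = 0}).toReal -
              (μ {x | x (0, 0) = 0}).toReal ^ 3 = 1 / 8 := by
  obtain ⟨hprob, hG, hinv⟩ := hμ
  have mcoord : ∀ (u : ℤ × ℤ) (a : ZMod 2),
      MeasurableSet {x : (ℤ × ℤ) → ZMod 2 | x u = a} := by
    intro u a
    show MeasurableSet ((fun x : (ℤ × ℤ) → ZMod 2 => x u) ⁻¹' {a})
    exact measurable_pi_apply u (measurableSet_singleton a)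
  have maddg : ∀ g : (ℤ × ℤ) → ZMod 2,
      Measurable (fun x : (ℤ × ℤ) → ZMod 2 => x + g) := by
    intro g
    refine measurable_pi_iff.mpr fun u => ?_
    exact (Measurable.of_discrete (f := fun v : ZMod 2 => v + g u)).comp
      (measurable_pi_apply u)
  have key : ∀ g : (ℤ × ℤ) → ZMod 2, ThreeDotConfig g → ∀ S : Set ((ℤ × ℤ) → ZMod 2),
      MeasurableSet S → μ ((fun x => x + g) ⁻¹' S) = μ S := by
    intro g hg S hS
    conv_rhs => rw [← hinv g hg]
    rw [Measure.map_apply (maddg g) hS]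
  have hGm : MeasurableSet {x | ThreeDotConfig x} := by
    have hrw : {x | ThreeDotConfig x} =
        ⋂ (i : ℤ) (j : ℤ),
          {x : (ℤ × ℤ) → ZMod 2 | x (i, j) + x (i + 1, j) + x (i, j + 1) = 0} := by
      ext x; simp [ThreeDotConfig, Set.mem_iInter]
    rw [hrw]
    refine MeasurableSet.iInter fun i => MeasurableSet.iInter fun j => ?_
    have hm : Measurable (fun x : (ℤ × ℤ) → ZMod 2 =>
        x (i, j) + x (i + 1, j) + x (i, j + 1)) := by
      have hfe : (fun x : (ℤ × ℤ) → ZMod 2 => x (i, j) + x (i + 1, j) + x (i, j + 1))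
          = (fun q : ZMod 2 × ZMod 2 × ZMod 2 => q.1 + q.2.1 + q.2.2) ∘
            (fun x => (x (i, j), x (i + 1, j), x (i, j + 1))) := rfl
      rw [hfe]
      exact Measurable.of_discrete.comp
        ((measurable_pi_apply _).prodMk
          ((measurable_pi_apply _).prodMk (measurable_pi_apply _)))
    exact hm (measurableSet_singleton 0)
  have hGc : μ {x | ThreeDotConfig x}ᶜ = 0 := by
    rw [measure_compl hGm (measure_ne_top μ _), hG, measure_univ, tsub_self]
  have interG : ∀ E : Set ((ℤ × ℤ) → ZMod 2), μ (E ∩ {x | ThreeDotConfig x}) = μ E :=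
    fun E => measure_inter_conull hGc
  -- the half computation
  have g0v0 : gconf 0 (0, 0) = 1 := by rw [gconf_row0]; simp
  have halfswap : μ {x : (ℤ × ℤ) → ZMod 2 | x (0, 0) = 0}
      = μ {x : (ℤ × ℤ) → ZMod 2 | x (0, 0) = 1} := by
    have hpre : (fun x : (ℤ × ℤ) → ZMod 2 => x + gconf 0) ⁻¹'
        {x | x (0, 0) = 1} = {x | x (0, 0) = 0} := by
      ext x
      simp only [Set.mem_preimage, Set.mem_setOf_eq, Pi.add_apply, g0v0]
      constructor
      · intro h; linear_combination h
      · intro h; linear_combination h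
    rw [← hpre, key (gconf 0) (gconf_threeDot 0) _ (mcoord _ _)]
  have hcompl : {x : (ℤ × ℤ) → ZMod 2 | x (0, 0) = 0}ᶜ
      = {x : (ℤ × ℤ) → ZMod 2 | x (0, 0) = 1} := by
    ext x
    constructor
    · intro hx; exact zmod2_ne_zero _ hx
    · intro hx h0
      have h0' : x (0, 0) = 0 := h0
      have hx' : x (0, 0) = 1 := hx
      rw [hx'] at h0'; exact one_ne_zero h0'
  have half : μ {x : (ℤ × ℤ) → ZMod 2 | x (0, 0) = 0} = 1 / 2 := by
    have hsum := measure_add_measure_compl (μ := μ) (mcoord (0, 0) 0)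
    rw [hcompl, ← halfswap, measure_univ] at hsum
    rw [ENNReal.eq_div_iff (by norm_num) (by norm_num), two_mul]
    exact hsum
  -- the quarter computation
  have hq : ∀ n : ℕ,
      μ {x : (ℤ × ℤ) → ZMod 2 | x (0, 0) = 0 ∧ x ((2 : ℤ) ^ n, 0) = 0 ∧
        x (0, (2 : ℤ) ^ n) = 0} = 1 / 4 := by
    intro n
    set p : ℤ := (2 : ℤ) ^ n with hp
    have hp0 : 0 < p := pow_pos (by norm_num) n
    have hv0 : gconf p (0, 0) = 0 := by rw [gconf_row0, if_neg (by omega)]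
    have hvp : gconf p (p, 0) = 1 := by rw [gconf_row0, if_pos rfl]
    have hAm : ∀ b : ZMod 2,
        MeasurableSet {x : (ℤ × ℤ) → ZMod 2 | x (0, 0) = 0 ∧ x (p, 0) = b} := by
      intro b
      have he : {x : (ℤ × ℤ) → ZMod 2 | x (0, 0) = 0 ∧ x (p, 0) = b}
          = {x | x (0, 0) = 0} ∩ {x | x (p, 0) = b} := rfl
      rw [he]; exact (mcoord _ _).inter (mcoord _ _)
    have hswapA : μ {x : (ℤ × ℤ) → ZMod 2 | x (0, 0) = 0 ∧ x (p, 0) = 0}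
        = μ {x : (ℤ × ℤ) → ZMod 2 | x (0, 0) = 0 ∧ x (p, 0) = 1} := by
      have hpre : (fun x : (ℤ × ℤ) → ZMod 2 => x + gconf p) ⁻¹'
          {x | x (0, 0) = 0 ∧ x (p, 0) = 1} = {x | x (0, 0) = 0 ∧ x (p, 0) = 0} := by
        ext x
        simp only [Set.mem_preimage, Set.mem_setOf_eq, Pi.add_apply, hv0, hvp, add_zero]
        constructor
        · rintro ⟨h1, h2⟩; exact ⟨h1, by linear_combination h2⟩
        · rintro ⟨h1, h2⟩; exact ⟨h1, by linear_combination h2⟩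
      rw [← hpre, key (gconf p) (gconf_threeDot p) _ (hAm 1)]
    have quarter : μ {x : (ℤ × ℤ) → ZMod 2 | x (0, 0) = 0 ∧ x (p, 0) = 0} = 1 / 4 := by
      have hsplit := measure_inter_add_diff (μ := μ)
        {x : (ℤ × ℤ) → ZMod 2 | x (0, 0) = 0} (mcoord (p, 0) 0)
      have e1 : {x : (ℤ × ℤ) → ZMod 2 | x (0, 0) = 0} ∩ {x | x (p, 0) = 0}
          = {x | x (0, 0) = 0 ∧ x (p, 0) = 0} := rfl
      have e2 : {x : (ℤ × ℤ) → ZMod 2 | x (0, 0) = 0} \ {x | x (p, 0) = 0}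
          = {x | x (0, 0) = 0 ∧ x (p, 0) = 1} := by
        ext x
        constructor
        · rintro ⟨h1, h2⟩; exact ⟨h1, zmod2_ne_zero _ h2⟩
        · rintro ⟨h1, h2⟩
          refine ⟨h1, fun h0 => ?_⟩
          have h0' : x (p, 0) = 0 := h0
          rw [h2] at h0'; exact one_ne_zero h0'
      rw [e1, e2, ← hswapA, half] at hsplit
      rw [ENNReal.eq_div_iff (by norm_num) (by norm_num)]
      calc (4 : ENNReal) * μ {x : (ℤ × ℤ) → ZMod 2 | x (0, 0) = 0 ∧ x (p, 0) = 0}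
          = 2 * (μ {x : (ℤ × ℤ) → ZMod 2 | x (0, 0) = 0 ∧ x (p, 0) = 0}
            + μ {x : (ℤ × ℤ) → ZMod 2 | x (0, 0) = 0 ∧ x (p, 0) = 0}) := by ring
        _ = 2 * (1 / 2) := by rw [hsplit]
        _ = 1 := by rw [mul_one_div, ENNReal.div_self (by norm_num) (by norm_num)]
    have hT : {x : (ℤ × ℤ) → ZMod 2 | x (0, 0) = 0 ∧ x (p, 0) = 0 ∧ x (0, p) = 0}
        ∩ {x | ThreeDotConfig x}
        = {x : (ℤ × ℤ) → ZMod 2 | x (0, 0) = 0 ∧ x (p, 0) = 0} ∩ {x | ThreeDotConfig x} := by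
      ext x
      constructor
      · rintro ⟨⟨h1, h2, _⟩, hg⟩; exact ⟨⟨h1, h2⟩, hg⟩
      · rintro ⟨⟨h1, h2⟩, hg⟩
        refine ⟨⟨h1, h2, ?_⟩, hg⟩
        have hprop := propagate x hg n 0 0
        rw [zero_add] at hprop
        rw [hp, hprop, h1]
        rw [hp] at h2
        rw [h2, add_zero]
    rw [← interG {x : (ℤ × ℤ) → ZMod 2 | x (0, 0) = 0 ∧ x (p, 0) = 0 ∧ x (0, p) = 0},
      hT, interG]
    exact quarter
  refine ⟨hq, half, fun n => ?_⟩
  rw [hq n, half]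
  norm_num [ENNReal.toReal_div]
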